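/- If ℝ\A is dense in the Euclidean topology, then for every x ∉ A and every strictly decreasing sequence (x_n) in ℝ\A converging to x, the sets [x, x_n) are clopen in (ℝ, τ_A) and form a neighborhood base at x. -/

import Mathlib

open Set

/-- The Hattori topology on ℝ: points of `A` have Euclidean neighborhood base
`(x-ε, x+ε)`, points outside `A` have Sorgenfrey neighborhood base `[x, x+ε)`. -/
def hattori (A : Set ℝ) : TopologicalSpace ℝ where
  IsOpen U := ∀ x ∈ U, ∃ ε > (0 : ℝ),
    (x ∈ A → Ioo (x - ε) (x + ε) ⊆ U) ∧ (x ∉ A → Ico x (x + ε) ⊆ U)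
  isOpen_univ := fun x _ => ⟨1, one_pos, fun _ => subset_univ _, fun _ => subset_univ _⟩
  isOpen_inter := by
    intro U V hU hV x hx
    obtain ⟨ε₁, hε₁, h₁, h₁'⟩ := hU x hx.1
    obtain ⟨ε₂, hε₂, h₂, h₂'⟩ := hV x hx.2
    have l1 := min_le_left ε₁ ε₂
    have l2 := min_le_right ε₁ ε₂
    refine ⟨min ε₁ ε₂, lt_min hε₁ hε₂, fun hA => ?_, fun hA => ?_⟩
    · intro y hy
      exact ⟨h₁ hA ⟨by linarith [hy.1], by linarith [hy.2]⟩,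
             h₂ hA ⟨by linarith [hy.1], by linarith [hy.2]⟩⟩
    · intro y hy
      exact ⟨h₁' hA ⟨hy.1, by linarith [hy.2]⟩, h₂' hA ⟨hy.1, by linarith [hy.2]⟩⟩
  isOpen_sUnion := by
    intro S hS x hx
    obtain ⟨U, hU, hxU⟩ := hx
    obtain ⟨ε, hε, h, h'⟩ := hS U hU x hxU
    exact ⟨ε, hε, fun hA => (h hA).trans (subset_sUnion_of_mem hU),
      fun hA => (h' hA).trans (subset_sUnion_of_mem hU)⟩

/-- The Sorgenfrey (lower limit) topology on ℝ. -/
def sorgenfrey : TopologicalSpace ℝ :=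
  TopologicalSpace.generateFrom {S | ∃ a b : ℝ, S = Ico a b}

theorem stmt7 (A : Set ℝ) (hd : Dense Aᶜ) (x₀ : ℝ) (hx₀ : x₀ ∉ A)
    (x : ℕ → ℝ) (hanti : StrictAnti x) (hmem : ∀ n, x n ∉ A)
    (hlim : Filter.Tendsto x Filter.atTop (nhds x₀)) :
    (∀ n, @IsClopen ℝ (hattori A) (Set.Ico x₀ (x n))) ∧
      (@nhds ℝ (hattori A) x₀).HasBasis (fun _ : ℕ => True)
        (fun n => Set.Ico x₀ (x n)) := by
  have hgt : ∀ n, x₀ < x n := by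
    intro n
    have h1 : x₀ ≤ x (n + 1) :=
      le_of_tendsto hlim (Filter.eventually_atTop.2
        ⟨n + 1, fun m hm => hanti.antitone hm⟩)
    exact h1.trans_lt (hanti (Nat.lt_succ_self n))
  have hopen : ∀ n, @IsOpen ℝ (hattori A) (Ico x₀ (x n)) := by
    intro n
    show ∀ y ∈ Ico x₀ (x n), _
    intro y hy
    by_cases hyA : y ∈ A
    · have hne : x₀ < y := lt_of_le_of_ne hy.1 (by rintro rfl; exact hx₀ hyA)
      have h1 := min_le_left (y - x₀) (x n - y)
      have h2 := min_le_right (y - x₀) (x n - y)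
      refine ⟨min (y - x₀) (x n - y),
        lt_min (by linarith) (by linarith [hy.2]),
        fun _ z hz => ⟨by linarith [hz.1], by linarith [hz.2]⟩,
        fun h => absurd hyA h⟩
    · exact ⟨x n - y, by linarith [hy.2], fun h => absurd h hyA,
        fun _ z hz => ⟨hy.1.trans hz.1, by linarith [hz.2]⟩⟩
  have hclosed : ∀ n, @IsClosed ℝ (hattori A) (Ico x₀ (x n)) := by
    intro n
    rw [← @isOpen_compl_iff ℝ _ (hattori A)]
    show ∀ y ∈ (Ico x₀ (x n))ᶜ, _
    intro y hy
    rw [mem_compl_iff, mem_Ico, not_and_or, not_le, not_lt] at hy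
    rcases hy with hy | hy
    · refine ⟨x₀ - y, by linarith, fun _ z hz => ?_, fun _ z hz => ?_⟩
      · intro hz'; exact absurd hz'.1 (by linarith [hz.2])
      · intro hz'; exact absurd hz'.1 (by linarith [hz.2])
    · by_cases hyA : y ∈ A
      · have hne : x n < y := lt_of_le_of_ne hy (by rintro rfl; exact hmem n hyA)
        refine ⟨y - x n, by linarith, fun _ z hz => ?_, fun h => absurd hyA h⟩
        intro hz'; exact absurd hz'.2 (by linarith [hz.1])
      · refine ⟨1, one_pos, fun h => absurd h hyA, fun _ z hz => ?_⟩
        intro hz'; exact absurd hz'.2 (by linarith [hz.1])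
  refine ⟨fun n => ⟨hclosed n, hopen n⟩, ?_⟩
  rw [Filter.hasBasis_iff]
  intro t
  constructor
  · intro ht
    obtain ⟨s, hst, hs, hxs⟩ := @mem_nhds_iff ℝ (hattori A) x₀ t |>.1 ht
    obtain ⟨ε, hε, _, h2⟩ := hs x₀ hxs
    have hev : ∀ᶠ m in Filter.atTop, x m < x₀ + ε :=
      hlim.eventually (eventually_lt_nhds (by linarith))
    obtain ⟨n, hn⟩ := hev.exists
    refine ⟨n, trivial, fun z hz => hst (h2 hx₀ ⟨hz.1, hz.2.trans hn⟩)⟩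
  · rintro ⟨n, -, hsub⟩
    exact Filter.mem_of_superset
      (@IsOpen.mem_nhds ℝ (hattori A) x₀ _ (hopen n) ⟨le_refl _, hgt n⟩) hsub
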